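/- Let (X,d) be a path metric space and 0 < p < q. Then the inclusion-induced map H₁(Rips(X,p)) → H₁(Rips(X,q)) is surjective. -/
import Mathlib


/-- The simplicial boundary operator on formal `𝕜`-linear combinations of
`(n+1)`-tuples of vertices of `X`. -/
noncomputable def bdry (𝕜 : Type*) [Field 𝕜] (X : Type*) (n : ℕ) :
    ((Fin (n + 1) → X) →₀ 𝕜) →ₗ[𝕜] ((Fin n → X) →₀ 𝕜) :=
  Finsupp.lift ((Fin n → X) →₀ 𝕜) 𝕜 (Fin (n + 1) → X) fun σ =>
    ∑ i : Fin (n + 1), ((-1 : 𝕜) ^ (i : ℕ)) • Finsupp.single (σ ∘ i.succAbove) 1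

/-- The subspace of chains supported on tuples satisfying `K` (the simplices of
a simplicial complex, given as a predicate on tuples of vertices). -/
noncomputable def chainsIn (𝕜 : Type*) [Field 𝕜] {X : Type*} (n : ℕ)
    (K : (Fin n → X) → Prop) : Submodule 𝕜 ((Fin n → X) →₀ 𝕜) :=
  Submodule.span 𝕜 {c | ∃ σ, K σ ∧ c = Finsupp.single σ (1 : 𝕜)}

/-- The chain map induced by a vertex map `f : X → Y`. -/
noncomputable def pushChain (𝕜 : Type*) [Field 𝕜] {X Y : Type*} (n : ℕ) (f : X → Y) :
    ((Fin n → X) →₀ 𝕜) →ₗ[𝕜] ((Fin n → Y) →₀ 𝕜) :=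
  Finsupp.lmapDomain 𝕜 𝕜 fun σ : Fin n → X => f ∘ σ

section Aux

variable (𝕜 : Type*) [Field 𝕜] {X : Type*}

/-- The edge–subdivision chain map associated to a choice of midpoints `m`. -/
noncomputable def subdivL (m : (Fin 2 → X) → X) :
    ((Fin 2 → X) →₀ 𝕜) →ₗ[𝕜] ((Fin 2 → X) →₀ 𝕜) :=
  Finsupp.lift ((Fin 2 → X) →₀ 𝕜) 𝕜 (Fin 2 → X) fun σ =>
    Finsupp.single ![σ 0, m σ] 1 + Finsupp.single ![m σ, σ 1] 1

/-- The chain homotopy (cone) associated to a choice of midpoints `m`. -/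
noncomputable def coneL (m : (Fin 2 → X) → X) :
    ((Fin 2 → X) →₀ 𝕜) →ₗ[𝕜] ((Fin 3 → X) →₀ 𝕜) :=
  Finsupp.lift ((Fin 3 → X) →₀ 𝕜) 𝕜 (Fin 2 → X) fun σ =>
    Finsupp.single ![σ 0, m σ, σ 1] 1

lemma subdivL_single (m : (Fin 2 → X) → X) (σ : Fin 2 → X) :
    subdivL 𝕜 m (Finsupp.single σ 1) =
      Finsupp.single ![σ 0, m σ] 1 + Finsupp.single ![m σ, σ 1] 1 := by
  simp [subdivL]

lemma coneL_single (m : (Fin 2 → X) → X) (σ : Fin 2 → X) :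
    coneL 𝕜 m (Finsupp.single σ 1) = Finsupp.single ![σ 0, m σ, σ 1] 1 := by
  simp [coneL]

lemma eta2 (σ : Fin 2 → X) : ![σ 0, σ 1] = σ := by
  funext i; fin_cases i <;> rfl

lemma bdry1_single (τ : Fin 2 → X) :
    bdry 𝕜 X 1 (Finsupp.single τ 1) =
      Finsupp.single (fun _ : Fin 1 => τ 1) 1 - Finsupp.single (fun _ : Fin 1 => τ 0) 1 := by
  have h1 : τ ∘ Fin.succ = (fun _ : Fin 1 => τ 1) := by funext j; fin_cases j <;> rfl
  have h2 : τ ∘ (1 : Fin 2).succAbove = (fun _ : Fin 1 => τ 0) := by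
    funext j; fin_cases j <;> rfl
  simp [bdry, Fin.sum_univ_two, h1, h2, sub_eq_add_neg]

lemma bdry2_single (τ : Fin 3 → X) :
    bdry 𝕜 X 2 (Finsupp.single τ 1) =
      Finsupp.single ![τ 1, τ 2] 1 - Finsupp.single ![τ 0, τ 2] 1
        + Finsupp.single ![τ 0, τ 1] 1 := by
  have h0 : τ ∘ Fin.succ = ![τ 1, τ 2] := by funext j; fin_cases j <;> rfl
  have h1 : τ ∘ (1 : Fin 3).succAbove = ![τ 0, τ 2] := by funext j; fin_cases j <;> rfl
  have h2 : τ ∘ (2 : Fin 3).succAbove = ![τ 0, τ 1] := by funext j; fin_cases j <;> rfl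
  simp [bdry, Fin.sum_univ_three, h0, h1, h2, sub_eq_add_neg]

lemma bdry_subdivL (m : (Fin 2 → X) → X) (c : (Fin 2 → X) →₀ 𝕜) :
    bdry 𝕜 X 1 (subdivL 𝕜 m c) = bdry 𝕜 X 1 c := by
  have : (bdry 𝕜 X 1).comp (subdivL 𝕜 m) = bdry 𝕜 X 1 := by
    apply Finsupp.lhom_ext; intro σ b
    have hb : (Finsupp.single σ b) = b • Finsupp.single σ (1 : 𝕜) := by
      rw [Finsupp.smul_single, smul_eq_mul, mul_one]
    rw [hb, map_smul, map_smul]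
    congr 1
    rw [LinearMap.comp_apply, subdivL_single, map_add, bdry1_single, bdry1_single,
      bdry1_single]
    simp only [Matrix.cons_val_zero, Matrix.cons_val_one, Matrix.head_cons]
    abel
  calc bdry 𝕜 X 1 (subdivL 𝕜 m c) = ((bdry 𝕜 X 1).comp (subdivL 𝕜 m)) c := rfl
    _ = bdry 𝕜 X 1 c := by rw [this]

lemma bdry_coneL (m : (Fin 2 → X) → X) (c : (Fin 2 → X) →₀ 𝕜) :
    bdry 𝕜 X 2 (coneL 𝕜 m c) = subdivL 𝕜 m c - c := by
  have : (bdry 𝕜 X 2).comp (coneL 𝕜 m) = subdivL 𝕜 m - LinearMap.id := by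
    apply Finsupp.lhom_ext; intro σ b
    have hb : (Finsupp.single σ b) = b • Finsupp.single σ (1 : 𝕜) := by
      rw [Finsupp.smul_single, smul_eq_mul, mul_one]
    rw [hb, map_smul, map_smul]
    congr 1
    rw [LinearMap.comp_apply, coneL_single, bdry2_single, LinearMap.sub_apply,
      LinearMap.id_apply, subdivL_single]
    simp only [Matrix.cons_val_zero, Matrix.cons_val_one, Matrix.head_cons,
      Matrix.cons_val_two, Matrix.tail_cons, eta2]
    abel
  calc bdry 𝕜 X 2 (coneL 𝕜 m c) = ((bdry 𝕜 X 2).comp (coneL 𝕜 m)) c := rfl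
    _ = subdivL 𝕜 m c - c := by
        rw [this]; simp

lemma single_mem_chainsIn {n : ℕ} {K : (Fin n → X) → Prop} {σ : Fin n → X} (h : K σ) :
    Finsupp.single σ (1 : 𝕜) ∈ chainsIn 𝕜 n K :=
  Submodule.subset_span ⟨σ, h, rfl⟩

lemma map_mem_chainsIn {n m : ℕ} {K : (Fin n → X) → Prop} {K' : (Fin m → X) → Prop}
    (f : ((Fin n → X) →₀ 𝕜) →ₗ[𝕜] ((Fin m → X) →₀ 𝕜))
    (hf : ∀ σ, K σ → f (Finsupp.single σ 1) ∈ chainsIn 𝕜 m K')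
    {c : (Fin n → X) →₀ 𝕜} (hc : c ∈ chainsIn 𝕜 n K) : f c ∈ chainsIn 𝕜 m K' := by
  induction hc using Submodule.span_induction with
  | mem x h => obtain ⟨σ, hσ, rfl⟩ := h; exact hf σ hσ
  | zero => simp [Submodule.zero_mem]
  | add a b _ _ ha hb => rw [map_add]; exact Submodule.add_mem _ ha hb
  | smul r a _ ha => rw [map_smul]; exact Submodule.smul_mem _ r ha

lemma chainsIn_mono {n : ℕ} {K K' : (Fin n → X) → Prop} (h : ∀ σ, K σ → K' σ) :
    chainsIn 𝕜 n K ≤ chainsIn 𝕜 n K' := by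
  apply Submodule.span_mono
  rintro _ ⟨σ, hσ, rfl⟩
  exact ⟨σ, h σ hσ, rfl⟩

lemma pair_mem {Y : Type*} [MetricSpace Y] (x y : Y) {a : ℝ} (h0 : 0 ≤ a)
    (hxy : dist x y ≤ a) : ∀ i j : Fin 2, dist (![x, y] i) (![x, y] j) ≤ a := by
  intro i j
  fin_cases i <;> fin_cases j
  · simpa using h0
  · simpa using hxy
  · simpa [dist_comm] using hxy
  · simpa using h0

lemma triple_mem {Y : Type*} [MetricSpace Y] (x z y : Y) {a : ℝ} (h0 : 0 ≤ a)
    (hxz : dist x z ≤ a) (hzy : dist z y ≤ a) (hxy : dist x y ≤ a) :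
    ∀ i j : Fin 3, dist (![x, z, y] i) (![x, z, y] j) ≤ a := by
  intro i j
  fin_cases i <;> fin_cases j
  · simpa using h0
  · simpa using hxz
  · simpa using hxy
  · simpa [dist_comm] using hxz
  · simpa using h0
  · simpa using hzy
  · simpa [dist_comm] using hxy
  · simpa [dist_comm] using hzy
  · simpa using h0

end Aux

theorem stmt14 (𝕜 : Type*) [Field 𝕜] {X : Type*} [MetricSpace X]
    -- path metric space: approximate midpoints exist
    (hpath : ∀ (x x' : X) (ε : ℝ), 0 < ε →
      ∃ z : X, max (dist x z) (dist x' z) ≤ dist x x' / 2 + ε)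
    (p q : ℝ) (hp : 0 < p) (hpq : p < q)
    -- surjectivity of H₁(Rips(X, p)) → H₁(Rips(X, q)): every 1-cycle of
    -- Rips(X, q) is homologous in Rips(X, q) to a 1-cycle of Rips(X, p)
    (c : (Fin 2 → X) →₀ 𝕜)
    (hc : c ∈ chainsIn 𝕜 2 (fun σ : Fin 2 → X => ∀ i j, dist (σ i) (σ j) ≤ q))
    (hcyc : bdry 𝕜 X 1 c = 0) :
    ∃ c' ∈ chainsIn 𝕜 2 (fun σ : Fin 2 → X => ∀ i j, dist (σ i) (σ j) ≤ p),
      bdry 𝕜 X 1 c' = 0 ∧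
      ∃ b ∈ chainsIn 𝕜 3 (fun σ : Fin 3 → X => ∀ i j, dist (σ i) (σ j) ≤ q),
        c - c' = bdry 𝕜 X 2 b := by
  obtain ⟨ε, hεdef⟩ : ∃ ε : ℝ, ε = p / 4 := ⟨_, rfl⟩
  have hε : 0 < ε := by rw [hεdef]; positivity
  -- choice of approximate midpoints
  have hm' : ∀ σ : Fin 2 → X, ∃ z : X,
      dist (σ 0) z ≤ dist (σ 0) (σ 1) / 2 + ε ∧ dist (σ 1) z ≤ dist (σ 0) (σ 1) / 2 + ε := by
    intro σ
    obtain ⟨z, hz⟩ := hpath (σ 0) (σ 1) ε hε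
    exact ⟨z, (max_le_iff.1 hz).1, (max_le_iff.1 hz).2⟩
  choose m hm0 hm1 using hm'
  -- the bound sequence
  obtain ⟨B, hBdef⟩ : ∃ B : ℕ → ℝ, B = fun n => 2 * ε + (q - 2 * ε) / 2 ^ n := ⟨_, rfl⟩
  have hq2ε : 2 * ε < q := by
    have : 2 * ε < p := by rw [hεdef]; linarith
    linarith
  have hB0 : B 0 = q := by simp [hBdef]
  have hBpos : ∀ n, 2 * ε < B n := by
    intro n
    have hq' : 0 < q - 2 * ε := by linarith
    have : 0 < (q - 2 * ε) / 2 ^ n := by positivity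
    simp only [hBdef]; linarith
  have hBq : ∀ n, B n ≤ q := by
    intro n
    have h1 : (1 : ℝ) ≤ 2 ^ n := one_le_pow₀ (by norm_num)
    have : (q - 2 * ε) / 2 ^ n ≤ q - 2 * ε := by
      rw [div_le_iff₀ (by positivity)]
      nlinarith [sub_nonneg.2 hq2ε.le]
    simp only [hBdef]; linarith
  have hBsucc : ∀ n, B (n + 1) = B n / 2 + ε := by
    intro n
    simp only [hBdef, pow_succ]
    field_simp
    ring
  -- the iterated subdivisions
  obtain ⟨cs, hcsdef⟩ : ∃ cs : ℕ → ((Fin 2 → X) →₀ 𝕜), cs = fun n => (subdivL 𝕜 m)^[n] c :=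
    ⟨_, rfl⟩
  have hcs0 : cs 0 = c := by rw [hcsdef]; rfl
  have hcssucc : ∀ n, cs (n + 1) = subdivL 𝕜 m (cs n) := by
    intro n; rw [hcsdef]; exact Function.iterate_succ_apply' _ n c
  -- membership invariant
  have hmem : ∀ n, cs n ∈ chainsIn 𝕜 2 (fun σ : Fin 2 → X => ∀ i j, dist (σ i) (σ j) ≤ B n) := by
    intro n
    induction n with
    | zero => rw [hcs0]; exact (chainsIn_mono 𝕜 (fun σ h i j => by rw [hB0]; exact h i j)) hc
    | succ n ih =>
      rw [hcssucc]
      refine map_mem_chainsIn 𝕜 _ (fun σ hσ => ?_) ih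
      rw [subdivL_single]
      have h0 : dist (σ 0) (m σ) ≤ B (n + 1) := by
        have := hm0 σ; have := hσ 0 1; rw [hBsucc]; linarith
      have h1 : dist (σ 1) (m σ) ≤ B (n + 1) := by
        have := hm1 σ; have := hσ 0 1; rw [hBsucc]; linarith
      have hBn1 : 0 ≤ B (n + 1) := by
        have h2 := hBpos (n + 1); have : 0 ≤ 2 * ε := by positivity
        linarith
      exact Submodule.add_mem _
        (single_mem_chainsIn 𝕜 (pair_mem _ _ hBn1 h0))
        (single_mem_chainsIn 𝕜 (pair_mem _ _ hBn1 (by rw [dist_comm]; exact h1)))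
  -- cycles invariant
  have hcyc' : ∀ n, bdry 𝕜 X 1 (cs n) = 0 := by
    intro n
    induction n with
    | zero => rw [hcs0]; exact hcyc
    | succ n ih => rw [hcssucc, bdry_subdivL]; exact ih
  -- homology invariant
  have hhom : ∀ n, ∃ b ∈ chainsIn 𝕜 3 (fun σ : Fin 3 → X => ∀ i j, dist (σ i) (σ j) ≤ q),
      cs n - c = bdry 𝕜 X 2 b := by
    intro n
    induction n with
    | zero => exact ⟨0, Submodule.zero_mem _, by simp [hcs0]⟩
    | succ n ih =>
      obtain ⟨b, hb, hbeq⟩ := ih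
      refine ⟨coneL 𝕜 m (cs n) + b, Submodule.add_mem _ ?_ hb, ?_⟩
      · refine map_mem_chainsIn 𝕜 _ (fun σ hσ => ?_) (hmem n)
        rw [coneL_single]
        have hq0 : (0 : ℝ) ≤ q := by linarith
        have h0 : dist (σ 0) (m σ) ≤ q := by
          have := hm0 σ; have h01 := hσ 0 1; have h2 := hBpos n; have h3 := hBq n; linarith
        have h1 : dist (σ 1) (m σ) ≤ q := by
          have := hm1 σ; have h01 := hσ 0 1; have h2 := hBpos n; have h3 := hBq n; linarith
        have h01q : dist (σ 0) (σ 1) ≤ q := le_trans (hσ 0 1) (hBq n)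
        exact single_mem_chainsIn 𝕜
          (triple_mem _ _ _ hq0 h0 (by rw [dist_comm]; exact h1) h01q)
      · rw [map_add, ← hbeq, hcssucc, bdry_coneL]; abel
  -- choose n with B n ≤ p
  have hex : ∃ n : ℕ, B n ≤ p := by
    obtain ⟨n, hn⟩ := pow_unbounded_of_one_lt ((q - 2 * ε) / (2 * ε)) (one_lt_two (α := ℝ))
    refine ⟨n, ?_⟩
    have h2ε : 0 < 2 * ε := by positivity
    have : (q - 2 * ε) / 2 ^ n < 2 * ε := by
      rw [div_lt_iff₀ (by positivity)]
      have := (div_lt_iff₀ h2ε).1 hn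
      nlinarith
    have hεp : 2 * ε + 2 * ε ≤ p := by rw [hεdef]; linarith
    simp only [hBdef]; linarith
  obtain ⟨n, hn⟩ := hex
  obtain ⟨b, hb, hbeq⟩ := hhom n
  refine ⟨cs n, (chainsIn_mono 𝕜 (fun σ h i j => le_trans (h i j) hn)) (hmem n),
    hcyc' n, -b, Submodule.neg_mem _ hb, ?_⟩
  rw [map_neg, ← hbeq]; abel
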